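/- (Proposition: LFI 1.) Let n ≥ 0. Suppose L_{(N)a}(q), N = 0,1,…,n, are smooth generalized Killing vectors of Γ, G(q) is a smooth function with L_{(1)a} = −G_{,a} when n > 0, the conditions (L_{(k−1)b}Q^b)_{,a} = −k(k+1) L_{(k+1)a} hold for k = 1,…,n (with the right-hand side present only for k < n, and for k = n the relation states that L_{(n−1)b}Q^b is constant), and L_{(n)a}Q^a = s₀ is constant. Then I = Σ_{N=0}^{n} L_{(N)a} t^N q̇^a + s₀ t^{n+1}/(n+1) + Σ_{N=1}^{n} (L_{(N−1)a}Q^a) t^N/N + G(q) is a first integral of q̈^a = −Γ^a_{bc}q̇^bq̇^c − Q^a. -/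

import Mathlib

noncomputable section
open scoped BigOperators

/-- Points of the configuration space `ℝ^D`. -/
abbrev Vec (D : ℕ) := Fin D → ℝ

/-- Connection coefficients: `Γ q a b c = Γ^a_{bc}(q)`. -/
abbrev Conn (D : ℕ) := Vec D → Fin D → Fin D → Fin D → ℝ

/-- Partial derivative `∂f/∂q^j`. -/
def pd {D : ℕ} (j : Fin D) (f : Vec D → ℝ) (q : Vec D) : ℝ :=
  fderiv ℝ f q (Pi.single j 1)

/-- Covariant derivative of a covector field:
`L_{a|b} = ∂L_a/∂q^b − Γ^s_{ab} L_s`. -/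
def covD1 {D : ℕ} (Γ : Conn D) (L : Vec D → Fin D → ℝ) (q : Vec D) (a b : Fin D) : ℝ :=
  pd b (fun p => L p a) q - ∑ s, Γ q s a b * L q s

/-- Generalized Killing vector: `L_{(a|b)} = 0`. -/
def IsGenKV {D : ℕ} (Γ : Conn D) (L : Vec D → Fin D → ℝ) : Prop :=
  ∀ q a b, covD1 Γ L q a b + covD1 Γ L q b a = 0

/-- `q, v` solve `q̈^a = -Γ^a_{bc}(q) q̇^b q̇^c - Q^a(q)` on the set `s ⊆ ℝ`. -/
def IsSolutionOn {D : ℕ} (Γ : Conn D) (Q : Vec D → Fin D → ℝ)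
    (s : Set ℝ) (q v : ℝ → Vec D) : Prop :=
  ∀ t ∈ s, ∀ a : Fin D,
    HasDerivAt (fun τ => q τ a) (v t a) t ∧
    HasDerivAt (fun τ => v τ a)
      (-(∑ b, ∑ c, Γ (q t) a b c * v t b * v t c) - Q (q t) a) t

/-- `I(t,q,q̇)` is a first integral of the system: it is constant along every
(C²) solution defined on an open interval. -/
def FirstIntegral {D : ℕ} (Γ : Conn D) (Q : Vec D → Fin D → ℝ)
    (I : ℝ → Vec D → Vec D → ℝ) : Prop :=
  ∀ (a b : ℝ) (q v : ℝ → Vec D), IsSolutionOn Γ Q (Set.Ioo a b) q v →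
    ∀ t₁ ∈ Set.Ioo a b, ∀ t₂ ∈ Set.Ioo a b,
      I t₁ (q t₁) (v t₁) = I t₂ (q t₂) (v t₂)

lemma fderiv_apply_eq_sum_pd {D : ℕ} {f : Vec D → ℝ} (x : Vec D) (w : Vec D) :
    fderiv ℝ f x w = ∑ b, pd b f x * w b := by
  have hw : w = ∑ b, w b • (Pi.single b 1 : Vec D) := by
    funext i
    rw [Finset.sum_apply]
    simp [Pi.single_apply]
  conv_lhs => rw [hw]
  rw [map_sum]
  simp [pd, mul_comm]

lemma hasDerivAt_comp_sum {D : ℕ} {f : Vec D → ℝ} (hf : ContDiff ℝ (⊤:ℕ∞) f)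
    {q : ℝ → Vec D} {w : Vec D} {t : ℝ}
    (hq : ∀ a, HasDerivAt (fun τ => q τ a) (w a) t) :
    HasDerivAt (fun τ => f (q τ)) (∑ b, pd b f (q t) * w b) t := by
  have hq' : HasDerivAt q w t := hasDerivAt_pi.2 hq
  have hdf : HasFDerivAt f (fderiv ℝ f (q t)) (q t) :=
    (hf.differentiable (by simp) (q t)).hasFDerivAt
  have h := hdf.comp_hasDerivAt t hq'
  rwa [fderiv_apply_eq_sum_pd] at h

lemma sum_covD_mul_self {D : ℕ} {Γ : Conn D} {Lv : Vec D → Fin D → ℝ} (hK : IsGenKV Γ Lv)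
    (x : Vec D) (w : Fin D → ℝ) :
    ∑ a, ∑ b, covD1 Γ Lv x a b * w a * w b = 0 := by
  set S := ∑ a, ∑ b, covD1 Γ Lv x a b * w a * w b with hS
  have h1 : S = ∑ a, ∑ b, covD1 Γ Lv x b a * w b * w a := Finset.sum_comm
  have h2 : S + S = 0 := by
    nth_rewrite 2 [h1]
    rw [hS]
    simp only [← Finset.sum_add_distrib]
    apply Finset.sum_eq_zero; intro a _
    apply Finset.sum_eq_zero; intro b _
    linear_combination (w a * w b) * hK x a b
  linarith

lemma sum_comm3 {M : Type*} [AddCommMonoid M] {D : ℕ} (f : Fin D → Fin D → Fin D → M) :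
    ∑ a, ∑ b, ∑ c, f a b c = ∑ c, ∑ a, ∑ b, f a b c := by
  calc ∑ a, ∑ b, ∑ c, f a b c = ∑ a, ∑ c, ∑ b, f a b c :=
        Finset.sum_congr rfl fun a _ => Finset.sum_comm
    _ = ∑ c, ∑ a, ∑ b, f a b c := Finset.sum_comm

lemma hasDerivAt_g {D : ℕ} (Γ : Conn D) (Q : Vec D → Fin D → ℝ)
    {Lv : Vec D → Fin D → ℝ} (hLsm : ∀ a, ContDiff ℝ (⊤:ℕ∞) fun p => Lv p a)
    (hK : IsGenKV Γ Lv)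
    {q v : ℝ → Vec D} {t : ℝ}
    (hqd : ∀ a, HasDerivAt (fun τ => q τ a) (v t a) t)
    (hvd : ∀ a, HasDerivAt (fun τ => v τ a)
      (-(∑ b, ∑ c, Γ (q t) a b c * v t b * v t c) - Q (q t) a) t) :
    HasDerivAt (fun τ => ∑ a, Lv (q τ) a * v τ a) (-(∑ a, Lv (q t) a * Q (q t) a)) t := by
  have hterm : ∀ a : Fin D, HasDerivAt (fun τ => Lv (q τ) a * v τ a)
      ((∑ b, pd b (fun p => Lv p a) (q t) * v t b) * v t a
        + Lv (q t) a * (-(∑ b, ∑ c, Γ (q t) a b c * v t b * v t c) - Q (q t) a)) t :=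
    fun a => (hasDerivAt_comp_sum (hLsm a) hqd).mul (hvd a)
  have hsum := HasDerivAt.fun_sum (fun a (_ : a ∈ Finset.univ) => hterm a)
  have hP : ∀ a b, pd b (fun p => Lv p a) (q t)
      = covD1 Γ Lv (q t) a b + ∑ s, Γ (q t) s a b * Lv (q t) s := fun a b => by
    simp [covD1]
  have key : ∑ a, (∑ b, pd b (fun p => Lv p a) (q t) * v t b) * v t a
      = ∑ a, Lv (q t) a * (∑ b, ∑ c, Γ (q t) a b c * v t b * v t c) := by
    calc ∑ a, (∑ b, pd b (fun p => Lv p a) (q t) * v t b) * v t a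
        = ∑ a, ∑ b, (covD1 Γ Lv (q t) a b * v t a * v t b
            + (∑ s, Γ (q t) s a b * Lv (q t) s) * v t b * v t a) := by
          refine Finset.sum_congr rfl fun a _ => ?_
          rw [Finset.sum_mul]
          refine Finset.sum_congr rfl fun b _ => ?_
          rw [hP a b]; ring
      _ = (∑ a, ∑ b, covD1 Γ Lv (q t) a b * v t a * v t b)
            + ∑ a, ∑ b, (∑ s, Γ (q t) s a b * Lv (q t) s) * v t b * v t a := by
          simp only [Finset.sum_add_distrib]
      _ = ∑ a, ∑ b, ∑ s, Γ (q t) s a b * Lv (q t) s * v t b * v t a := by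
          rw [sum_covD_mul_self hK, zero_add]
          refine Finset.sum_congr rfl fun a _ => Finset.sum_congr rfl fun b _ => ?_
          rw [Finset.sum_mul, Finset.sum_mul]
      _ = ∑ s, ∑ a, ∑ b, Γ (q t) s a b * Lv (q t) s * v t b * v t a := sum_comm3 _
      _ = ∑ a, Lv (q t) a * (∑ b, ∑ c, Γ (q t) a b c * v t b * v t c) := by
          refine Finset.sum_congr rfl fun s _ => ?_
          rw [Finset.mul_sum]
          refine Finset.sum_congr rfl fun a2 _ => ?_
          rw [Finset.mul_sum]
          refine Finset.sum_congr rfl fun b2 _ => ?_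
          ring
  refine hsum.congr_deriv ?_
  have split : ∑ a, ((∑ b, pd b (fun p => Lv p a) (q t) * v t b) * v t a
        + Lv (q t) a * (-(∑ b, ∑ c, Γ (q t) a b c * v t b * v t c) - Q (q t) a))
      = (∑ a, (∑ b, pd b (fun p => Lv p a) (q t) * v t b) * v t a)
        - (∑ a, Lv (q t) a * (∑ b, ∑ c, Γ (q t) a b c * v t b * v t c))
        - (∑ a, Lv (q t) a * Q (q t) a) := by
    rw [← Finset.sum_sub_distrib, ← Finset.sum_sub_distrib]
    exact Finset.sum_congr rfl fun a _ => by ring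
  rw [split, key]; ring

lemma alg (n : ℕ) (g h : ℕ → ℝ) (t s₀ : ℝ) (hgn1 : g (n+1) = 0) (hhn : h n = s₀) :
    (∑ N ∈ Finset.range (n+1), (-(h N) * t^N + g N * ((N:ℝ) * t^(N-1))))
    + s₀ * t ^ n
    + (∑ N ∈ Finset.range n, (-(((N:ℝ)+1)*((N:ℝ)+2)) * g (N+2) * t^(N+1)
         + h N * (((N+1:ℕ):ℝ) * t^N)) / ((N+1:ℕ):ℝ))
    + -(g 1) = 0 := by
  have e3 : ∀ N ∈ Finset.range n, (-(((N:ℝ)+1)*((N:ℝ)+2)) * g (N+2) * t^(N+1)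
         + h N * (((N+1:ℕ):ℝ) * t^N)) / ((N+1:ℕ):ℝ)
       = -((((N:ℝ)+2) * g (N+2)) * t^(N+1)) + h N * t^N := by
    intro N _
    have hne : ((N:ℝ)+1) ≠ 0 := by positivity
    push_cast
    field_simp
  rw [Finset.sum_congr rfl e3]
  rw [Finset.sum_add_distrib, Finset.sum_add_distrib]
  have eA : ∑ N ∈ Finset.range (n+1), -(h N) * t^N
      = (∑ N ∈ Finset.range n, -(h N) * t^N) + -(s₀) * t^n := by
    rw [Finset.sum_range_succ, hhn]
  have eB : ∑ N ∈ Finset.range (n+1), g N * ((N:ℝ) * t^(N-1))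
      = ∑ N ∈ Finset.range n, g (N+1) * (((N:ℝ)+1) * t^N) := by
    rw [Finset.sum_range_succ']
    simp only [Nat.cast_zero, zero_mul, mul_zero, add_zero, Nat.add_sub_cancel,
      Nat.cast_add, Nat.cast_one]
  have eC : ∑ N ∈ Finset.range n, -((((N:ℝ)+2) * g (N+2)) * t^(N+1))
      = -(∑ N ∈ Finset.range n, g (N+1) * (((N:ℝ)+1) * t^N)) + g 1 := by
    have h1 : ∑ N ∈ Finset.range (n+1), g (N+1) * (((N:ℝ)+1) * t^N)
        = (∑ N ∈ Finset.range n, (((N:ℝ)+2) * g (N+2)) * t^(N+1)) + g 1 := by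
      rw [Finset.sum_range_succ']
      congr 1
      · exact Finset.sum_congr rfl fun N _ => by push_cast; ring
      · norm_num
    have h2 : ∑ N ∈ Finset.range (n+1), g (N+1) * (((N:ℝ)+1) * t^N)
        = ∑ N ∈ Finset.range n, g (N+1) * (((N:ℝ)+1) * t^N) := by
      rw [Finset.sum_range_succ, hgn1]; ring
    have h3 : ∑ N ∈ Finset.range n, -((((N:ℝ)+2) * g (N+2)) * t^(N+1))
        = -(∑ N ∈ Finset.range n, (((N:ℝ)+2) * g (N+2)) * t^(N+1)) :=
      Finset.sum_neg_distrib _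
    rw [h3]; linarith
  have eH : ∑ N ∈ Finset.range n, -(h N) * t^N = -(∑ N ∈ Finset.range n, h N * t^N) := by
    simp only [neg_mul]; exact Finset.sum_neg_distrib _
  rw [eA, eB, eC, eH]
  ring

/-- Proposition: LFI 1. `L N` represents the generalized Killing
vector `L_{(N)a}`, `N = 0,…,n`; components with `N > n` are absent, i.e. vanish,
which encodes the "present only if" conventions (in particular `L_{(1)a}(n>0)`
and, for `k = n`, the constancy of `L_{(n−1)b}Q^b`). -/
theorem stmt3 {D n : ℕ}
    (Γ : Conn D) (Q : Vec D → Fin D → ℝ)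
    (hΓsym : ∀ q a b c, Γ q a b c = Γ q a c b)
    (hΓ : ∀ a b c, ContDiff ℝ (⊤ : ℕ∞) fun q => Γ q a b c)
    (hQ : ∀ a, ContDiff ℝ (⊤ : ℕ∞) fun q => Q q a)
    (L : ℕ → Vec D → Fin D → ℝ) (G : Vec D → ℝ) (s₀ : ℝ)
    (hLsm : ∀ N a, ContDiff ℝ (⊤ : ℕ∞) fun q => L N q a)
    (hL0 : ∀ N, n < N → L N = fun _ _ => 0)
    (hG : ContDiff ℝ (⊤ : ℕ∞) G)
    -- the `L_{(N)a}` are generalized Killing vectors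
    (hKV : ∀ N, N ≤ n → IsGenKV Γ (L N))
    -- `L_{(1)a}(n>0) = −G_{,a}`
    (hG1 : ∀ q a, L 1 q a = -pd a G q)
    -- `(L_{(k−1)b}Q^b)_{,a} = −k(k+1) L_{(k+1)a}`, `k = 1,…,n`
    (hc : ∀ k, 1 ≤ k → k ≤ n → ∀ q (a : Fin D),
      pd a (fun p => ∑ b, L (k - 1) p b * Q p b) q =
        -((k : ℝ) * ((k : ℝ) + 1)) * L (k + 1) q a)
    -- `L_{(n)a} Q^a = s₀` is a constant
    (hs₀ : ∀ q, ∑ a, L n q a * Q q a = s₀) :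
    FirstIntegral Γ Q (fun t q v =>
      (∑ N ∈ Finset.range (n + 1), (∑ a, L N q a * v a) * t ^ N)
      + s₀ * t ^ (n + 1) / ((n + 1 : ℕ) : ℝ)
      + (∑ N ∈ Finset.range n, (∑ a, L N q a * Q q a) * t ^ (N + 1) / ((N + 1 : ℕ) : ℝ))
      + G q) := by
  intro A B q v hsol t₁ ht₁ t₂ ht₂
  set FF : ℝ → ℝ := fun τ =>
      (∑ N ∈ Finset.range (n + 1), (∑ a, L N (q τ) a * v τ a) * τ ^ N)
      + s₀ * τ ^ (n + 1) / ((n + 1 : ℕ) : ℝ)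
      + (∑ N ∈ Finset.range n, (∑ a, L N (q τ) a * Q (q τ) a) * τ ^ (N + 1) / ((N + 1 : ℕ) : ℝ))
      + G (q τ) with hFF
  show FF t₁ = FF t₂
  have hder : ∀ t ∈ Set.Ioo A B, HasDerivAt FF 0 t := by
    intro t ht
    have hqd : ∀ a, HasDerivAt (fun τ => q τ a) (v t a) t := fun a => (hsol t ht a).1
    have hvd : ∀ a, HasDerivAt (fun τ => v τ a)
        (-(∑ b, ∑ c, Γ (q t) a b c * v t b * v t c) - Q (q t) a) t :=
      fun a => (hsol t ht a).2
    have hg : ∀ N, N ≤ n → HasDerivAt (fun τ => ∑ a, L N (q τ) a * v τ a)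
        (-(∑ a, L N (q t) a * Q (q t) a)) t :=
      fun N hN => hasDerivAt_g Γ Q (hLsm N) (hKV N hN) hqd hvd
    have hh : ∀ N, N < n → HasDerivAt (fun τ => ∑ a, L N (q τ) a * Q (q τ) a)
        (-(((N:ℝ)+1) * ((N:ℝ)+2)) * (∑ a, L (N+2) (q t) a * v t a)) t := by
      intro N hN
      have hfsm : ContDiff ℝ (⊤:ℕ∞) (fun p => ∑ b, L N p b * Q p b) :=
        ContDiff.sum fun b _ => (hLsm N b).mul (hQ b)
      have h0 := hasDerivAt_comp_sum hfsm hqd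
      convert h0 using 1
      have hck := hc (N+1) (by omega) (by omega)
      simp only [Nat.add_sub_cancel] at hck
      rw [Finset.mul_sum]
      refine Finset.sum_congr rfl fun a _ => ?_
      rw [hck (q t) a]
      push_cast
      ring
    have hG' : HasDerivAt (fun τ => G (q τ)) (-(∑ a, L 1 (q t) a * v t a)) t := by
      have h0 := hasDerivAt_comp_sum hG hqd
      convert h0 using 1
      rw [← Finset.sum_neg_distrib]
      refine Finset.sum_congr rfl fun a _ => ?_
      rw [hG1 (q t) a]
      ring
    have h1 : HasDerivAt (fun τ => ∑ N ∈ Finset.range (n+1), (∑ a, L N (q τ) a * v τ a) * τ ^ N)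
        (∑ N ∈ Finset.range (n+1),
          (-(∑ a, L N (q t) a * Q (q t) a) * t ^ N
            + (∑ a, L N (q t) a * v t a) * ((N:ℝ) * t ^ (N-1)))) t :=
      HasDerivAt.fun_sum fun N hN =>
        (hg N (Nat.lt_succ_iff.mp (Finset.mem_range.mp hN))).mul (hasDerivAt_pow N t)
    have h2 : HasDerivAt (fun τ => s₀ * τ ^ (n+1) / ((n+1:ℕ):ℝ)) (s₀ * t ^ n) t := by
      have h := ((hasDerivAt_pow (n+1) t).const_mul s₀).div_const ((n+1:ℕ):ℝ)
      refine h.congr_deriv ?_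
      have hne : ((n+1:ℕ):ℝ) ≠ 0 := by positivity
      simp only [Nat.add_sub_cancel]
      field_simp
    have h3 : HasDerivAt
        (fun τ => ∑ N ∈ Finset.range n, (∑ a, L N (q τ) a * Q (q τ) a) * τ ^ (N+1) / ((N+1:ℕ):ℝ))
        (∑ N ∈ Finset.range n,
          (-(((N:ℝ)+1)*((N:ℝ)+2)) * (∑ a, L (N+2) (q t) a * v t a) * t^(N+1)
            + (∑ a, L N (q t) a * Q (q t) a) * (((N+1:ℕ):ℝ) * t^N)) / ((N+1:ℕ):ℝ)) t := by
      refine HasDerivAt.fun_sum fun N hN => ?_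
      have h0 := ((hh N (Finset.mem_range.mp hN)).mul (hasDerivAt_pow (N+1) t)).div_const
        ((N+1:ℕ):ℝ)
      simpa [Nat.add_sub_cancel] using h0
    have hFt := ((h1.add h2).add h3).add hG'
    have hE := alg n (fun M => ∑ a, L M (q t) a * v t a) (fun M => ∑ a, L M (q t) a * Q (q t) a)
      t s₀ (by simp [hL0 (n+1) (by omega)]) (hs₀ (q t))
    rw [hFF]
    rw [← hE]
    exact hFt
  have key : ∀ s u, s ∈ Set.Ioo A B → u ∈ Set.Ioo A B → s ≤ u → FF s = FF u := by
    intro s u hs hu hsu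
    have hsub : Set.Icc s u ⊆ Set.Ioo A B := fun x hx =>
      ⟨lt_of_lt_of_le hs.1 hx.1, lt_of_le_of_lt hx.2 hu.2⟩
    have hcont : ContinuousOn FF (Set.Icc s u) := fun x hx =>
      (hder x (hsub hx)).continuousAt.continuousWithinAt
    have hder' : ∀ x ∈ Set.Ico s u, HasDerivWithinAt FF 0 (Set.Ici x) x :=
      fun x hx => (hder x (hsub (Set.Ico_subset_Icc_self hx))).hasDerivWithinAt
    exact (constant_of_has_deriv_right_zero hcont hder' u (Set.right_mem_Icc.2 hsu)).symm
  rcases le_total t₁ t₂ with hle | hle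
  · exact key t₁ t₂ ht₁ ht₂ hle
  · exact (key t₂ t₁ ht₂ ht₁ hle).symm
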